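/- Quadratic barycenter estimate for decomposed maps. There exists an absolute constant C > 0 with the following property. Let σ be the surface measure on S², let a, b ∈ ℝ³, and let w⊥ ∈ L⁴(S², σ; ℝ³) satisfy the orthogonality conditions ∫_{S²} ⟨w⊥(x), ⟨c,x⟩x⟩ dσ(x) = 0 and ∫_{S²} ⟨w⊥(x), c − ⟨c,x⟩x⟩ dσ(x) = 0 for every c ∈ ℝ³. Set w(x) := ⟨a,x⟩x + (b − ⟨b,x⟩x) + w⊥(x). Then | ∫_{S²} |w(x)|² x dσ(x) | ≤ C |a| ‖w‖_{L²(σ)} + C ‖w⊥‖_{L²(σ)} ‖w‖_{L²(σ)}. -/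

import Mathlib

open MeasureTheory RealInnerProductSpace Real

/-- The unit sphere `S² ⊆ ℝ³`. -/
noncomputable def S2 : Set (EuclideanSpace ℝ (Fin 3)) :=
  Metric.sphere (0 : EuclideanSpace ℝ (Fin 3)) 1

/-- The surface measure on `S²` (two-dimensional Hausdorff measure restricted
to the sphere). -/
noncomputable def sphereMeasure : Measure (EuclideanSpace ℝ (Fin 3)) :=
  (μH[2] : Measure (EuclideanSpace ℝ (Fin 3))).restrict S2

/-- First radial vectorial spherical harmonic mode `N₁(a)(x) = ⟨a,x⟩x`. -/
noncomputable def N1 (a x : EuclideanSpace ℝ (Fin 3)) : EuclideanSpace ℝ (Fin 3) :=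
  ⟪a, x⟫ • x

/-- First tangential vectorial spherical harmonic mode `Ψ₁(b)(x) = b − ⟨b,x⟩x`. -/
noncomputable def Psi1 (b x : EuclideanSpace ℝ (Fin 3)) : EuclideanSpace ℝ (Fin 3) :=
  b - ⟪b, x⟫ • x

open scoped ENNReal NNReal

noncomputable def sphParam (p : Fin 2 → ℝ) : EuclideanSpace ℝ (Fin 3) :=
  (WithLp.equiv 2 (Fin 3 → ℝ)).symm
    ![Real.cos (p 0) * Real.sin (p 1), Real.sin (p 0) * Real.sin (p 1), Real.cos (p 1)]

abbrev E3 := EuclideanSpace ℝ (Fin 3)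


lemma sin_lip (a b : ℝ) : |Real.sin a - Real.sin b| ≤ |a - b| := by
  rw [Real.sin_sub_sin]
  calc |2 * Real.sin ((a - b) / 2) * Real.cos ((a + b) / 2)|
      ≤ 2 * |(a - b) / 2| * 1 := by
        rw [abs_mul, abs_mul, abs_two]
        exact mul_le_mul (mul_le_mul le_rfl Real.abs_sin_le_abs (abs_nonneg _) (by norm_num))
          (Real.abs_cos_le_one _) (abs_nonneg _) (by positivity)
    _ = |a - b| := by rw [abs_div, abs_two]; ring

lemma cos_lip (a b : ℝ) : |Real.cos a - Real.cos b| ≤ |a - b| := by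
  rw [Real.cos_sub_cos]
  calc |-2 * Real.sin ((a + b) / 2) * Real.sin ((a - b) / 2)|
      ≤ 2 * 1 * |(a - b) / 2| := by
        rw [abs_mul, abs_mul, abs_neg, abs_two]
        exact mul_le_mul (mul_le_mul le_rfl (Real.abs_sin_le_one _) (abs_nonneg _) (by norm_num))
          Real.abs_sin_le_abs (abs_nonneg _) (by positivity)
    _ = |a - b| := by rw [abs_div, abs_two]; ring

lemma prod_trig_lip (f g : ℝ → ℝ) (hf : ∀ x, |f x| ≤ 1) (hg : ∀ x, |g x| ≤ 1)
    (hf' : ∀ x y, |f x - f y| ≤ |x - y|) (hg' : ∀ x y, |g x - g y| ≤ |x - y|)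
    (a b a' b' : ℝ) : |f a * g b - f a' * g b'| ≤ |a - a'| + |b - b'| := by
  have h : f a * g b - f a' * g b' = (f a - f a') * g b + f a' * (g b - g b') := by ring
  rw [h]
  calc |(f a - f a') * g b + f a' * (g b - g b')|
      ≤ |(f a - f a') * g b| + |f a' * (g b - g b')| := abs_add_le _ _
    _ ≤ |a - a'| * 1 + 1 * |b - b'| := by
        rw [abs_mul, abs_mul]
        exact add_le_add (mul_le_mul (hf' a a') (hg b) (abs_nonneg _) (abs_nonneg _))
          (mul_le_mul (hf a') (hg' b b') (abs_nonneg _) zero_le_one)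
    _ = |a - a'| + |b - b'| := by ring

lemma sphParam_lip : LipschitzWith 4 sphParam := by
  apply LipschitzWith.of_dist_le_mul
  intro p q
  rw [NNReal.coe_ofNat]
  have hD : ∀ i, |p i - q i| ≤ dist p q := fun i => by
    rw [← Real.dist_eq]; exact dist_le_pi_dist p q i
  have hc : ∀ i : Fin 3, |sphParam p i - sphParam q i| ≤ 2 * dist p q := by
    intro i
    fin_cases i
    · show |Real.cos (p 0) * Real.sin (p 1) - Real.cos (q 0) * Real.sin (q 1)| ≤ 2 * dist p q
      calc _ ≤ |p 0 - q 0| + |p 1 - q 1| :=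
            prod_trig_lip _ _ Real.abs_cos_le_one Real.abs_sin_le_one cos_lip sin_lip _ _ _ _
        _ ≤ dist p q + dist p q := add_le_add (hD 0) (hD 1)
        _ = 2 * dist p q := by ring
    · show |Real.sin (p 0) * Real.sin (p 1) - Real.sin (q 0) * Real.sin (q 1)| ≤ 2 * dist p q
      calc _ ≤ |p 0 - q 0| + |p 1 - q 1| :=
            prod_trig_lip _ _ Real.abs_sin_le_one Real.abs_sin_le_one sin_lip sin_lip _ _ _ _
        _ ≤ dist p q + dist p q := add_le_add (hD 0) (hD 1)
        _ = 2 * dist p q := by ring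
    · show |Real.cos (p 1) - Real.cos (q 1)| ≤ 2 * dist p q
      calc _ ≤ |p 1 - q 1| := cos_lip _ _
        _ ≤ 2 * dist p q := by
            have := hD 1; have := dist_nonneg (x := p) (y := q); linarith
  rw [EuclideanSpace.dist_eq]
  have h16 : (∑ i : Fin 3, dist (sphParam p i) (sphParam q i) ^ 2) ≤ (4 * dist p q) ^ 2 := by
    have : ∀ i : Fin 3, dist (sphParam p i) (sphParam q i) ^ 2 ≤ (2 * dist p q) ^ 2 := by
      intro i
      rw [Real.dist_eq]
      exact sq_le_sq' (by have := hc i; have := abs_nonneg (sphParam p i - sphParam q i); linarith)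
        (hc i)
    calc (∑ i : Fin 3, dist (sphParam p i) (sphParam q i) ^ 2)
        ≤ ∑ _i : Fin 3, (2 * dist p q) ^ 2 := Finset.sum_le_sum fun i _ => this i
      _ ≤ (4 * dist p q) ^ 2 := by
          simp only [Finset.sum_const, Finset.card_univ, Fintype.card_fin, nsmul_eq_mul]
          push_cast
          nlinarith [dist_nonneg (x := p) (y := q)]
  calc Real.sqrt (∑ i : Fin 3, dist (sphParam p i) (sphParam q i) ^ 2)
      ≤ Real.sqrt ((4 * dist p q) ^ 2) := Real.sqrt_le_sqrt h16
    _ = 4 * dist p q := by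
        rw [Real.sqrt_sq (by positivity)]

lemma S2_measurable : MeasurableSet S2 := (Metric.isClosed_sphere).measurableSet

lemma S2_subset : S2 ⊆ sphParam '' Metric.closedBall 0 4 := by
  intro x hx
  have hx1 : ‖x‖ = 1 := by simpa [S2] using hx
  have hsum : x 0 ^ 2 + x 1 ^ 2 + x 2 ^ 2 = 1 := by
    have h := EuclideanSpace.norm_eq x
    rw [hx1] at h
    have h2 := Real.sqrt_eq_one.mp h.symm
    simpa [Fin.sum_univ_three, Real.norm_eq_abs, sq_abs] using h2
  have hx2le : x 2 ^ 2 ≤ 1 := by nlinarith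
  have hx2a : -1 ≤ x 2 := by nlinarith
  have hx2b : x 2 ≤ 1 := by nlinarith
  set z : ℂ := ⟨x 0, x 1⟩ with hz
  have habs : ‖z‖ = Real.sin (Real.arccos (x 2)) := by
    rw [Real.sin_arccos, Complex.norm_def, Complex.normSq_mk]
    congr 1
    nlinarith
  refine ⟨![Complex.arg z, Real.arccos (x 2)], ?_, ?_⟩
  · rw [Metric.mem_closedBall, dist_zero_right]
    refine (pi_norm_le_iff_of_nonneg (by norm_num)).2 fun i => ?_
    fin_cases i
    · show ‖Complex.arg z‖ ≤ 4
      rw [Real.norm_eq_abs]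
      exact (Complex.abs_arg_le_pi z).trans (by linarith [Real.pi_le_four])
    · show ‖Real.arccos (x 2)‖ ≤ 4
      rw [Real.norm_eq_abs, abs_of_nonneg (Real.arccos_nonneg _)]
      exact (Real.arccos_le_pi _).trans (by linarith [Real.pi_le_four])
  · ext i
    fin_cases i
    · show Real.cos (Complex.arg z) * Real.sin (Real.arccos (x 2)) = x 0
      rw [← habs, mul_comm, Complex.norm_mul_cos_arg]
    · show Real.sin (Complex.arg z) * Real.sin (Real.arccos (x 2)) = x 1
      rw [← habs, mul_comm, Complex.norm_mul_sin_arg]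
    · show Real.cos (Real.arccos (x 2)) = x 2
      exact Real.cos_arccos hx2a hx2b

instance sphereMeasure_finite : IsFiniteMeasure sphereMeasure := by
  constructor
  rw [sphereMeasure, Measure.restrict_apply_univ]
  have h1 : μH[2] S2 ≤ μH[2] (sphParam '' Metric.closedBall 0 4) := measure_mono S2_subset
  have h2 : μH[(2:ℝ)] (sphParam '' Metric.closedBall 0 4) ≤
      (4 : ℝ≥0∞) ^ (2:ℝ) * μH[(2:ℝ)] (Metric.closedBall (0 : Fin 2 → ℝ) 4) := by
    simpa using sphParam_lip.hausdorffMeasure_image_le (d := (2:ℝ)) (by norm_num)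
      (Metric.closedBall 0 4)
  have h3 : (μH[(2:ℝ)] : Measure (Fin 2 → ℝ)) = volume := by
    have := MeasureTheory.hausdorffMeasure_pi_real (ι := Fin 2)
    simpa using this
  have h4 : μH[(2:ℝ)] (Metric.closedBall (0 : Fin 2 → ℝ) 4) < ⊤ := by
    rw [h3]
    exact (isCompact_closedBall _ _).measure_lt_top
  calc μH[2] S2 ≤ _ := h1
    _ ≤ _ := h2
    _ < ⊤ := by
        apply ENNReal.mul_lt_top _ h4
        simp [ENNReal.rpow_natCast]

lemma neg_preimage_S2 : (fun x : EuclideanSpace ℝ (Fin 3) => -x) ⁻¹' S2 = S2 := by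
  ext x
  simp [S2, mem_sphere_zero_iff_norm]

lemma neg_measurePreserving :
    MeasurePreserving (fun x : EuclideanSpace ℝ (Fin 3) => -x) sphereMeasure sphereMeasure := by
  refine ⟨measurable_neg, ?_⟩
  have hiso : Measure.map (fun x : EuclideanSpace ℝ (Fin 3) => -x)
      (μH[2] : Measure (EuclideanSpace ℝ (Fin 3))) = μH[2] := by
    have := (LinearIsometryEquiv.neg ℝ (E := EuclideanSpace ℝ (Fin 3))).toIsometryEquiv.map_hausdorffMeasure (2:ℝ)
    simpa using this
  rw [sphereMeasure, ← neg_preimage_S2, ← Measure.restrict_map measurable_neg S2_measurable,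
    hiso, neg_preimage_S2]

lemma odd_integral_zero (g : EuclideanSpace ℝ (Fin 3) → EuclideanSpace ℝ (Fin 3))
    (hg : ∀ x, g (-x) = -g x) : ∫ x, g x ∂sphereMeasure = 0 := by
  have h1 : ∫ x, g (-x) ∂sphereMeasure = ∫ x, g x ∂sphereMeasure :=
    neg_measurePreserving.integral_comp
      (MeasurableEquiv.neg (EuclideanSpace ℝ (Fin 3))).measurableEmbedding g
  have h2 : ∫ x, g (-x) ∂sphereMeasure = -∫ x, g x ∂sphereMeasure := by
    simp only [hg]
    exact integral_neg g
  have h3 := h1.symm.trans h2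
  have h4 : (2:ℝ) • ∫ x, g x ∂sphereMeasure = 0 := by
    rw [two_smul]
    nth_rewrite 1 [h3]
    simp
  simpa using smul_eq_zero.mp h4

set_option maxHeartbeats 2000000 in
/-- Quadratic barycenter estimate for decomposed maps: there is an absolute
constant `C > 0` such that whenever `w = N₁(a) + Ψ₁(b) + w⊥` with
`w⊥ ∈ L⁴(S²;ℝ³)` orthogonal in `L²` to all first modes `N₁(c)`, `Ψ₁(c)`, one has
`|∫_{S²} |w|² x dσ| ≤ C|a|‖w‖_{L²} + C‖w⊥‖_{L²}‖w‖_{L²}`. -/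
theorem quadratic_barycenter_estimate :
    ∃ C : ℝ, 0 < C ∧
      ∀ (a b : EuclideanSpace ℝ (Fin 3))
        (wp : EuclideanSpace ℝ (Fin 3) → EuclideanSpace ℝ (Fin 3)),
        MemLp wp 4 sphereMeasure →
        (∀ c : EuclideanSpace ℝ (Fin 3), (∫ x, ⟪wp x, N1 c x⟫ ∂sphereMeasure) = 0) →
        (∀ c : EuclideanSpace ℝ (Fin 3), (∫ x, ⟪wp x, Psi1 c x⟫ ∂sphereMeasure) = 0) →
        ‖∫ x, ‖N1 a x + Psi1 b x + wp x‖ ^ 2 • x ∂sphereMeasure‖ ≤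
          C * ‖a‖ *
            Real.sqrt (∫ x, ‖N1 a x + Psi1 b x + wp x‖ ^ 2 ∂sphereMeasure) +
          C * Real.sqrt (∫ x, ‖wp x‖ ^ 2 ∂sphereMeasure) *
            Real.sqrt (∫ x, ‖N1 a x + Psi1 b x + wp x‖ ^ 2 ∂sphereMeasure) := by
  refine ⟨3, by norm_num, fun a b wp hwp h1 h2 => ?_⟩
  set σ := sphereMeasure with hσ
  set u : E3 → E3 := fun x => N1 a x + Psi1 b x with hu
  have hae1 : ∀ᵐ x ∂σ, ‖x‖ = 1 := by
    rw [hσ, sphereMeasure]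
    filter_upwards [ae_restrict_mem S2_measurable] with x hx
    simpa [S2] using hx
  -- measurability / boundedness of u
  have hcu : Continuous u := by
    simp only [hu, N1, Psi1]
    fun_prop
  have hub : ∀ᵐ x ∂σ, ‖u x‖ ≤ ‖a‖ + 2 * ‖b‖ := by
    filter_upwards [hae1] with x hx
    have h1 : ‖N1 a x‖ ≤ ‖a‖ := by
      rw [N1, norm_smul, hx, mul_one]
      calc |⟪a, x⟫| ≤ ‖a‖ * ‖x‖ := abs_real_inner_le_norm a x
        _ = ‖a‖ := by rw [hx, mul_one]
    have h2 : ‖Psi1 b x‖ ≤ 2 * ‖b‖ := by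
      rw [Psi1]
      calc ‖b - ⟪b, x⟫ • x‖ ≤ ‖b‖ + ‖⟪b, x⟫ • x‖ := norm_sub_le _ _
        _ ≤ ‖b‖ + ‖b‖ := by
            gcongr
            rw [norm_smul, hx, mul_one]
            calc |⟪b, x⟫| ≤ ‖b‖ * ‖x‖ := abs_real_inner_le_norm b x
              _ = ‖b‖ := by rw [hx, mul_one]
        _ = 2 * ‖b‖ := by ring
    calc ‖u x‖ ≤ ‖N1 a x‖ + ‖Psi1 b x‖ := norm_add_le _ _
      _ ≤ ‖a‖ + 2 * ‖b‖ := add_le_add h1 h2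
  have hu2 : MemLp u 2 σ := MemLp.of_bound hcu.aestronglyMeasurable _ hub
  have hv2 : MemLp wp 2 σ := hwp.mono_exponent (by norm_num)
  have hw2 : MemLp (fun x => u x + wp x) 2 σ := hu2.add hv2
  have u_eq : ∀ x, N1 a x + Psi1 b x + wp x = u x + wp x := fun x => by rw [hu]
  simp only [u_eq]
  have asm_u := hu2.aestronglyMeasurable
  have asm_v := hv2.aestronglyMeasurable
  have int_v1 : Integrable wp σ := hv2.integrable (by norm_num)
  have int_u2 : Integrable (fun x => ‖u x‖ ^ 2) σ := hu2.norm.integrable_sq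
  have int_v2 : Integrable (fun x => ‖wp x‖ ^ 2) σ := hv2.norm.integrable_sq
  have int_w2 : Integrable (fun x => ‖u x + wp x‖ ^ 2) σ := hw2.norm.integrable_sq
  have int_uv : Integrable (fun x => ⟪u x, wp x⟫) σ := by
    refine Integrable.mono' (int_v1.norm.const_mul (‖a‖ + 2 * ‖b‖)) (asm_u.inner asm_v) ?_
    filter_upwards [hub] with x hx
    calc ‖⟪u x, wp x⟫‖ = |⟪u x, wp x⟫| := rfl
      _ ≤ ‖u x‖ * ‖wp x‖ := abs_real_inner_le_norm _ _
      _ ≤ (‖a‖ + 2 * ‖b‖) * ‖wp x‖ := by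
          exact mul_le_mul_of_nonneg_right hx (norm_nonneg _)
  -- orthogonality: the cross term vanishes
  have huv0 : (∫ x, ⟪u x, wp x⟫ ∂σ) = 0 := by
    have hNb : ∀ᵐ x ∂σ, ‖N1 a x‖ ≤ ‖a‖ := by
      filter_upwards [hae1] with x hx
      rw [N1, norm_smul, hx, mul_one]
      calc |⟪a, x⟫| ≤ ‖a‖ * ‖x‖ := abs_real_inner_le_norm a x
        _ = ‖a‖ := by rw [hx, mul_one]
    have hPb : ∀ᵐ x ∂σ, ‖Psi1 b x‖ ≤ 2 * ‖b‖ := by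
      filter_upwards [hae1] with x hx
      rw [Psi1]
      calc ‖b - ⟪b, x⟫ • x‖ ≤ ‖b‖ + ‖⟪b, x⟫ • x‖ := norm_sub_le _ _
        _ ≤ ‖b‖ + ‖b‖ := by
            gcongr
            rw [norm_smul, hx, mul_one]
            calc |⟪b, x⟫| ≤ ‖b‖ * ‖x‖ := abs_real_inner_le_norm b x
              _ = ‖b‖ := by rw [hx, mul_one]
        _ = 2 * ‖b‖ := by ring
    have hcN : Continuous (fun x : E3 => N1 a x) := by
      simp only [N1]; fun_prop
    have hcP : Continuous (fun x : E3 => Psi1 b x) := by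
      simp only [Psi1]
      fun_prop
    have intN : Integrable (fun x => ⟪wp x, N1 a x⟫) σ := by
      refine Integrable.mono' (int_v1.norm.mul_const ‖a‖)
        (asm_v.inner hcN.aestronglyMeasurable) ?_
      filter_upwards [hNb] with x hx
      calc ‖⟪wp x, N1 a x⟫‖ = |⟪wp x, N1 a x⟫| := rfl
        _ ≤ ‖wp x‖ * ‖N1 a x‖ := abs_real_inner_le_norm _ _
        _ ≤ ‖wp x‖ * ‖a‖ := mul_le_mul_of_nonneg_left hx (norm_nonneg _)
    have intP : Integrable (fun x => ⟪wp x, Psi1 b x⟫) σ := by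
      refine Integrable.mono' (int_v1.norm.mul_const (2 * ‖b‖))
        (asm_v.inner hcP.aestronglyMeasurable) ?_
      filter_upwards [hPb] with x hx
      calc ‖⟪wp x, Psi1 b x⟫‖ = |⟪wp x, Psi1 b x⟫| := rfl
        _ ≤ ‖wp x‖ * ‖Psi1 b x‖ := abs_real_inner_le_norm _ _
        _ ≤ ‖wp x‖ * (2 * ‖b‖) := mul_le_mul_of_nonneg_left hx (norm_nonneg _)
    have hpt : ∀ x, ⟪u x, wp x⟫ = ⟪wp x, N1 a x⟫ + ⟪wp x, Psi1 b x⟫ := by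
      intro x
      rw [real_inner_comm, hu]
      exact inner_add_right _ _ _
    simp only [hpt]
    rw [integral_add intN intP, h1 a, h2 b, add_zero]
  -- Pythagoras
  have hpt : ∀ x : E3, ‖u x + wp x‖ ^ 2 = ‖u x‖ ^ 2 + 2 * ⟪u x, wp x⟫ + ‖wp x‖ ^ 2 :=
    fun x => norm_add_sq_real _ _
  have hW : (∫ x, ‖u x + wp x‖ ^ 2 ∂σ) =
      (∫ x, ‖u x‖ ^ 2 ∂σ) + (∫ x, ‖wp x‖ ^ 2 ∂σ) := by
    have e1 : Integrable (fun x => ‖u x‖ ^ 2 + 2 * ⟪u x, wp x⟫) σ := by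
      exact int_u2.add (int_uv.const_mul 2)
    simp only [hpt]
    rw [integral_add e1 int_v2, integral_add int_u2 (int_uv.const_mul 2), integral_const_mul,
      huv0, mul_zero, add_zero]
  set Iu := ∫ x, ‖u x‖ ^ 2 ∂σ with hIu
  set Iv := ∫ x, ‖wp x‖ ^ 2 ∂σ with hIv
  set Iw := ∫ x, ‖u x + wp x‖ ^ 2 ∂σ with hIw
  have Iu0 : 0 ≤ Iu := integral_nonneg fun x => by positivity
  have Iv0 : 0 ≤ Iv := integral_nonneg fun x => by positivity
  have Iw0 : 0 ≤ Iw := integral_nonneg fun x => by positivity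
  have hIuw : Iu ≤ Iw := by rw [hW]; linarith
  have hIvw : Iv ≤ Iw := by rw [hW]; linarith
  clear_value Iu Iv Iw
  -- vector-valued integrability
  have int_u2x : Integrable (fun x => ‖u x‖ ^ 2 • x) σ := by
    refine Integrable.mono' (integrable_const ((‖a‖ + 2 * ‖b‖) ^ 2))
      (((hcu.norm.pow 2).smul continuous_id).aestronglyMeasurable) ?_
    filter_upwards [hae1, hub] with x hx hbx
    rw [norm_smul, hx, mul_one, Real.norm_eq_abs, abs_of_nonneg (by positivity)]
    nlinarith [norm_nonneg (u x), hbx]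
  have int_absuv : Integrable (fun x => |⟪u x, wp x⟫|) σ := int_uv.abs
  have int_gx : Integrable (fun x => (2 * ⟪u x, wp x⟫ + ‖wp x‖ ^ 2) • x) σ := by
    refine Integrable.mono' ((int_absuv.const_mul 2).add int_v2)
      (((int_uv.aestronglyMeasurable.const_mul 2).add int_v2.aestronglyMeasurable).smul
        aestronglyMeasurable_id) ?_
    filter_upwards [hae1] with x hx
    rw [norm_smul, hx, mul_one]
    calc ‖2 * ⟪u x, wp x⟫ + ‖wp x‖ ^ 2‖ ≤ ‖2 * ⟪u x, wp x⟫‖ + ‖(‖wp x‖ ^ 2)‖ := norm_add_le _ _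
      _ = 2 * |⟪u x, wp x⟫| + ‖wp x‖ ^ 2 := by
          rw [Real.norm_eq_abs, Real.norm_eq_abs, abs_mul, abs_two,
            abs_of_nonneg (by positivity : (0:ℝ) ≤ ‖wp x‖ ^ 2)]
  -- the even part integrates to zero
  have hzero : (∫ x, ‖u x‖ ^ 2 • x ∂σ) = 0 := by
    refine odd_integral_zero _ fun x => ?_
    have hux : u (-x) = u x := by
      simp [hu, N1, Psi1, inner_neg_right]
    rw [hux, smul_neg]
  -- split the vector integral
  have hsplit : (∫ x, ‖u x + wp x‖ ^ 2 • x ∂σ) =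
      ∫ x, (2 * ⟪u x, wp x⟫ + ‖wp x‖ ^ 2) • x ∂σ := by
    have hpt2 : ∀ x : E3, ‖u x + wp x‖ ^ 2 • x =
        ‖u x‖ ^ 2 • x + (2 * ⟪u x, wp x⟫ + ‖wp x‖ ^ 2) • x := by
      intro x
      rw [hpt x, add_assoc, add_smul]
    simp only [hpt2]
    rw [integral_add int_u2x int_gx, hzero, zero_add]
  -- norm bound
  have key : ‖∫ x, ‖u x + wp x‖ ^ 2 • x ∂σ‖ ≤
      2 * (∫ x, |⟪u x, wp x⟫| ∂σ) + Iv := by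
    rw [hsplit]
    calc ‖∫ x, (2 * ⟪u x, wp x⟫ + ‖wp x‖ ^ 2) • x ∂σ‖
        ≤ ∫ x, ‖(2 * ⟪u x, wp x⟫ + ‖wp x‖ ^ 2) • x‖ ∂σ := norm_integral_le_integral_norm _
      _ ≤ ∫ x, (2 * |⟪u x, wp x⟫| + ‖wp x‖ ^ 2) ∂σ := by
          refine integral_mono_ae int_gx.norm ((int_absuv.const_mul 2).add int_v2) ?_
          filter_upwards [hae1] with x hx
          rw [norm_smul, hx, mul_one]
          calc ‖2 * ⟪u x, wp x⟫ + ‖wp x‖ ^ 2‖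
              ≤ ‖2 * ⟪u x, wp x⟫‖ + ‖(‖wp x‖ ^ 2)‖ := norm_add_le _ _
            _ = 2 * |⟪u x, wp x⟫| + ‖wp x‖ ^ 2 := by
                rw [Real.norm_eq_abs, Real.norm_eq_abs, abs_mul, abs_two,
                  abs_of_nonneg (by positivity : (0:ℝ) ≤ ‖wp x‖ ^ 2)]
      _ = 2 * (∫ x, |⟪u x, wp x⟫| ∂σ) + Iv := by
          have e2 : Integrable (fun x => 2 * |⟪u x, wp x⟫|) σ := int_absuv.const_mul 2
          rw [integral_add e2 int_v2, integral_const_mul, hIv]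
  -- Cauchy–Schwarz in L²
  have hCS : (∫ x, |⟪u x, wp x⟫| ∂σ) ≤ Real.sqrt Iu * Real.sqrt Iv := by
    have int_numu : Integrable (fun x => ‖u x‖ * ‖wp x‖) σ := by
      refine Integrable.mono' (int_v1.norm.const_mul (‖a‖ + 2 * ‖b‖))
        (asm_u.norm.mul asm_v.norm) ?_
      filter_upwards [hub] with x hx
      rw [Real.norm_eq_abs, abs_of_nonneg (by positivity)]
      exact mul_le_mul_of_nonneg_right hx (norm_nonneg _)
    have step1 : (∫ x, |⟪u x, wp x⟫| ∂σ) ≤ ∫ x, ‖u x‖ * ‖wp x‖ ∂σ := by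
      refine integral_mono int_absuv int_numu fun x => abs_real_inner_le_norm _ _
    have h22 : ENNReal.ofReal (2:ℝ) = 2 := by
      rw [ENNReal.ofReal_ofNat]
    have hconj : Real.HolderConjugate 2 2 := Real.HolderConjugate.two_two
    have step2 := integral_mul_le_Lp_mul_Lq_of_nonneg (μ := σ) hconj
      (f := fun x => ‖u x‖) (g := fun x => ‖wp x‖)
      (Filter.Eventually.of_forall fun x => norm_nonneg _)
      (Filter.Eventually.of_forall fun x => norm_nonneg _)
      (by rw [h22]; exact hu2.norm) (by rw [h22]; exact hv2.norm)
    have hr2 : ∀ y : ℝ, y ^ (2:ℝ) = y ^ 2 := fun y => by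
      rw [show (2:ℝ) = ((2:ℕ):ℝ) by norm_num, Real.rpow_natCast]
    simp only [hr2] at step2
    rw [← hIu, ← hIv] at step2
    calc (∫ x, |⟪u x, wp x⟫| ∂σ) ≤ ∫ x, ‖u x‖ * ‖wp x‖ ∂σ := step1
      _ ≤ Iu ^ ((1:ℝ)/2) * Iv ^ ((1:ℝ)/2) := step2
      _ = Real.sqrt Iu * Real.sqrt Iv := by
          rw [Real.sqrt_eq_rpow, Real.sqrt_eq_rpow]
  -- final assembly
  have hsu : Real.sqrt Iu ≤ Real.sqrt Iw := Real.sqrt_le_sqrt hIuw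
  have hsv : Real.sqrt Iv ≤ Real.sqrt Iw := Real.sqrt_le_sqrt hIvw
  have hIvsq : Real.sqrt Iv * Real.sqrt Iv = Iv := Real.mul_self_sqrt Iv0
  have sv0 : 0 ≤ Real.sqrt Iv := Real.sqrt_nonneg _
  have sw0 : 0 ≤ Real.sqrt Iw := Real.sqrt_nonneg _
  calc ‖∫ x, ‖u x + wp x‖ ^ 2 • x ∂σ‖
      ≤ 2 * (∫ x, |⟪u x, wp x⟫| ∂σ) + Iv := key
    _ ≤ 2 * (Real.sqrt Iu * Real.sqrt Iv) + Real.sqrt Iv * Real.sqrt Iv := by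
        nlinarith [hCS]
    _ ≤ 2 * (Real.sqrt Iw * Real.sqrt Iv) + Real.sqrt Iv * Real.sqrt Iw := by
        gcongr
    _ ≤ 3 * ‖a‖ * Real.sqrt Iw + 3 * Real.sqrt Iv * Real.sqrt Iw := by
        have h0 : 0 ≤ 3 * ‖a‖ * Real.sqrt Iw := by positivity
        nlinarith
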